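/- arXiv:1910.02287 — 2 statements merged into one kernel-verified Lean document; each statement's English description precedes it below -/
import Mathlib

section
/- Suppose r = R and that there exist two distinct points x_0, x_1 ∈ Ω̂ with dist(x_0, ∂Ω̂) = dist(x_1, ∂Ω̂) = R. Then inf { (∬_H J(x − y)|u(y) − u(x)|^2 dy dx) / (∫_{Γ_R} |u(x)|^2 dx) : u ∈ L^2(Ω_R ∪ Γ_R), ∫_{Γ_R} u = 0, ∫_{Γ_R} |u|^2 > 0 } = 0. -/
open MeasureTheory Set Metric
open scoped ENNReal NNReal Classical

noncomputable section

set_option maxHeartbeats 1000000 in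
/-- if `r = R` and there are two distinct points of `Ω̂` at distance exactly `R`
from the boundary, then the Poincaré-type infimum vanishes. -/
theorem poincare_constant_zero_when_r_eq_R
    (n : ℕ) (hn : 1 ≤ n)
    (Ωhat : Set (EuclideanSpace ℝ (Fin n)))
    (hΩopen : IsOpen Ωhat) (hΩconn : IsConnected Ωhat)
    (hΩbdd : Bornology.IsBounded Ωhat)
    (R : ℝ) (hR : 0 < R)
    (J : EuclideanSpace ℝ (Fin n) → ℝ)
    (hJcont : Continuous J) (hJnonneg : ∀ x, 0 ≤ J x)
    (hJradial : ∀ x y, ‖x‖ = ‖y‖ → J x = J y)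
    (hJdecr : ∀ x y, ‖x‖ ≤ ‖y‖ → J y ≤ J x)
    (hJpos : ∀ x, ‖x‖ < R → 0 < J x)
    (hJzero : ∀ x, R ≤ ‖x‖ → J x = 0)
    (hJint : ∫ w, J w = 1)
    (r : ℝ) (hr0 : 0 < r) (hrR : r = R)
    (Γ Ω : Set (EuclideanSpace ℝ (Fin n)))
    (hΓ : Γ = {x ∈ Ωhat | Metric.infDist x (frontier Ωhat) ≤ r})
    (hΩ : Ω = Ωhat \ Γ)
    (hΩint : (interior Ω).Nonempty)
    (x0 x1 : EuclideanSpace ℝ (Fin n)) (hx0 : x0 ∈ Ωhat) (hx1 : x1 ∈ Ωhat) (hx01 : x0 ≠ x1)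
    (hd0 : Metric.infDist x0 (frontier Ωhat) = R)
    (hd1 : Metric.infDist x1 (frontier Ωhat) = R) :
    ∀ ε : ℝ, 0 < ε →
      ∃ u : EuclideanSpace ℝ (Fin n) → ℝ,
        MemLp u 2 (volume.restrict (Ω ∪ Γ)) ∧
        (∫ x in Γ, u x) = 0 ∧
        0 < ∫ x in Γ, (u x) ^ 2 ∧
        ∫ z in ((Ω ∪ Γ) ×ˢ (Ω ∪ Γ)) \ (Γ ×ˢ Γ), J (z.1 - z.2) * (u z.2 - u z.1) ^ 2 <
          ε * ∫ x in Γ, (u x) ^ 2 := by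
  intro ε hε
  set F : Set (EuclideanSpace ℝ (Fin n)) := frontier Ωhat with hF
  -- the frontier is nonempty
  have hFne : F.Nonempty := by
    rcases eq_empty_or_nonempty F with h | h
    · exfalso
      rw [h, Metric.infDist_empty] at hd0
      linarith
    · exact h
  -- a unit vector
  have hnpos : 0 < n := hn
  set e : EuclideanSpace ℝ (Fin n) := EuclideanSpace.single (⟨0, hnpos⟩ : Fin n) (1 : ℝ) with he_def
  have he : ‖e‖ = 1 := by
    rw [he_def, EuclideanSpace.norm_single]; norm_num
  -- quantities
  set W : ℝ := (volume Ωhat).toReal with hW_def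
  have hW0 : 0 ≤ W := ENNReal.toReal_nonneg
  set ε₀ : ℝ := ε / (8 * W + 1) with hε₀_def
  have hε₀ : 0 < ε₀ := by positivity
  -- choose η > 0, η < R with J ((R - η) • e) < ε₀
  have hφcont : Continuous fun t : ℝ => J (t • e) :=
    hJcont.comp (continuous_id.smul continuous_const)
  have hφR : J ((R : ℝ) • e) = 0 := by
    apply hJzero
    rw [norm_smul, he]
    simp [abs_of_pos hR]
  obtain ⟨δ, hδ0, hδ⟩ := Metric.continuousAt_iff.mp hφcont.continuousAt ε₀ hε₀
  set η : ℝ := min (δ / 2) (R / 2) with hη_def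
  have hη0 : 0 < η := by
    apply lt_min <;> linarith
  have hηR : η < R := by
    have : η ≤ R / 2 := min_le_right _ _
    linarith
  set κ : ℝ := J ((R - η) • e) with hκ_def
  have hκ0 : 0 ≤ κ := hJnonneg _
  have hκε : κ < ε₀ := by
    have h1 : dist (R - η) R < δ := by
      rw [Real.dist_eq]
      have : η ≤ δ / 2 := min_le_left _ _
      rw [abs_of_nonpos (by linarith)]
      linarith
    have := hδ h1
    rw [Real.dist_eq, hφR, sub_zero] at this
    calc κ ≤ |J ((R - η) • e)| := le_abs_self _
      _ < ε₀ := this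
  -- a point of Ωhat close to the boundary
  obtain ⟨q, hq⟩ := hFne
  have hqcl : q ∈ closure Ωhat := frontier_subset_closure hq
  obtain ⟨p, hpΩ, hpq⟩ := Metric.mem_closure_iff.mp hqcl (η / 2) (by linarith)
  have hpd : Metric.infDist p F < η := by
    have h1 : Metric.infDist p F ≤ dist p q := Metric.infDist_le_dist_of_mem hq
    rw [dist_comm] at hpq
    linarith
  -- an open neighborhood inside Ωhat of points at distance < η from the boundary
  set U : Set (EuclideanSpace ℝ (Fin n)) := Ωhat ∩ {x | Metric.infDist x F < η} with hU_def
  have hUopen : IsOpen U :=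
    hΩopen.inter (isOpen_lt (continuous_infDist_pt F) continuous_const)
  have hpU : p ∈ U := ⟨hpΩ, hpd⟩
  obtain ⟨ρ, hρ0, hρball⟩ := Metric.isOpen_iff.mp hUopen p hpU
  -- two small disjoint balls
  set p2 : EuclideanSpace ℝ (Fin n) := p + (ρ / 2) • e with hp2_def
  have hdistpp2 : dist p p2 = ρ / 2 := by
    rw [hp2_def, dist_eq_norm]
    have : p - (p + (ρ / 2) • e) = -((ρ / 2) • e) := by abel
    rw [this, norm_neg, norm_smul, he]
    rw [Real.norm_eq_abs, abs_of_pos (by linarith)]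
    ring
  set ρ' : ℝ := ρ / 8 with hρ'_def
  have hρ'0 : 0 < ρ' := by rw [hρ'_def]; linarith
  set B1 : Set (EuclideanSpace ℝ (Fin n)) := Metric.ball p ρ' with hB1_def
  set B2 : Set (EuclideanSpace ℝ (Fin n)) := Metric.ball p2 ρ' with hB2_def
  have hB1U : B1 ⊆ U := fun x hx => hρball (Metric.ball_subset_ball (by rw [hρ'_def]; linarith) hx)
  have hB2U : B2 ⊆ U := by
    intro x hx
    apply hρball
    rw [Metric.mem_ball] at hx ⊢
    have : dist x p ≤ dist x p2 + dist p2 p := dist_triangle _ _ _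
    rw [dist_comm p2 p] at this
    rw [hdistpp2] at this
    rw [hρ'_def] at hx
    linarith
  have hdis : Disjoint B1 B2 := by
    apply Metric.ball_disjoint_ball
    rw [hdistpp2, hρ'_def]
    linarith
  set S : Set (EuclideanSpace ℝ (Fin n)) := B1 ∪ B2 with hS_def
  have hSU : S ⊆ U := union_subset hB1U hB2U
  have hSΓ : S ⊆ Γ := by
    intro x hx
    obtain ⟨hxΩ, hxd⟩ := hSU hx
    rw [hΓ]
    exact ⟨hxΩ, by rw [hrR]; exact le_of_lt (lt_trans hxd hηR)⟩
  -- the test function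
  set u : EuclideanSpace ℝ (Fin n) → ℝ := fun x =>
    B1.indicator (fun _ => (1 : ℝ)) x - B2.indicator (fun _ => (1 : ℝ)) x with hu_def
  -- measurability facts
  have hB1m : MeasurableSet B1 := measurableSet_ball
  have hB2m : MeasurableSet B2 := measurableSet_ball
  have hΓm : MeasurableSet Γ := by
    rw [hΓ]
    exact hΩopen.measurableSet.inter
      (measurableSet_le (continuous_infDist_pt F).measurable measurable_const)
  have hΩm : MeasurableSet Ω := by
    rw [hΩ]; exact hΩopen.measurableSet.diff hΓm
  have hum : Measurable u :=
    (measurable_const.indicator hB1m).sub (measurable_const.indicator hB2m)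
  have hu_abs : ∀ x, |u x| ≤ 1 := by
    intro x
    rw [hu_def]
    by_cases h1 : x ∈ B1 <;> by_cases h2 : x ∈ B2 <;>
      simp [Set.indicator_of_mem, Set.indicator_of_notMem, h1, h2]
  -- subsets of Ωhat
  have hΓsub : Γ ⊆ Ωhat := by rw [hΓ]; exact sep_subset _ _
  have hΩsub : Ω ⊆ Ωhat := by rw [hΩ]; exact diff_subset
  have hΩΓsub : Ω ∪ Γ ⊆ Ωhat := union_subset hΩsub hΓsub
  have hΩhatfin : volume Ωhat < ∞ := hΩbdd.measure_lt_top
  have hΓfin : volume Γ < ∞ := lt_of_le_of_lt (measure_mono hΓsub) hΩhatfin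
  have hΓfinM : IsFiniteMeasure (volume.restrict Γ) :=
    ⟨by rwa [Measure.restrict_apply_univ]⟩
  -- ball measures
  have hVeq : volume B1 = volume B2 := by
    rw [hB1_def, hB2_def, Measure.addHaar_ball_center volume p,
      Measure.addHaar_ball_center volume p2]
  have hVfin : volume B1 < ∞ := measure_ball_lt_top
  have hVpos : 0 < volume B1 := Metric.measure_ball_pos _ _ hρ'0
  set Vb : ℝ := (volume B1).toReal with hVb_def
  have hVb0 : 0 < Vb := ENNReal.toReal_pos hVpos.ne' hVfin.ne
  -- Memℒp
  have hmem : MemLp u 2 (volume.restrict (Ω ∪ Γ)) := by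
    have h1 : MemLp (B1.indicator fun _ => (1 : ℝ)) 2 (volume.restrict (Ω ∪ Γ)) := by
      apply memLp_indicator_const 2 hB1m
      right
      exact ((Measure.restrict_apply_le _ _).trans_lt hVfin).ne
    have h2 : MemLp (B2.indicator fun _ => (1 : ℝ)) 2 (volume.restrict (Ω ∪ Γ)) := by
      apply memLp_indicator_const 2 hB2m
      right
      exact ((Measure.restrict_apply_le _ _).trans_lt (hVeq ▸ hVfin)).ne
    exact h1.sub h2
  -- integrability of indicators on Γ
  have hint1 : IntegrableOn (B1.indicator fun _ => (1 : ℝ)) Γ volume :=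
    (integrableOn_const hΓfin.ne).indicator hB1m
  have hint2 : IntegrableOn (B2.indicator fun _ => (1 : ℝ)) Γ volume :=
    (integrableOn_const hΓfin.ne).indicator hB2m
  -- mean zero
  have hIB1 : (∫ x in Γ, B1.indicator (fun _ => (1 : ℝ)) x) = Vb := by
    rw [setIntegral_indicator hB1m,
      Set.inter_eq_self_of_subset_right (fun x hx => hSΓ (Or.inl hx))]
    rw [setIntegral_const]
    simp [hVb_def, measureReal_def]
  have hIB2 : (∫ x in Γ, B2.indicator (fun _ => (1 : ℝ)) x) = Vb := by
    rw [setIntegral_indicator hB2m,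
      Set.inter_eq_self_of_subset_right (fun x hx => hSΓ (Or.inr hx))]
    rw [setIntegral_const]
    simp [hVb_def, hVeq, measureReal_def]
  have hmean : (∫ x in Γ, u x) = 0 := by
    rw [hu_def]
    rw [integral_sub hint1 hint2, hIB1, hIB2, sub_self]
  -- the square of u
  have hsq : ∀ x, u x ^ 2 = S.indicator (fun _ => (1 : ℝ)) x := by
    intro x
    rw [hu_def, hS_def]
    by_cases h1 : x ∈ B1 <;> by_cases h2 : x ∈ B2
    · exact absurd h2 (Set.disjoint_left.mp hdis h1)
    · simp [Set.indicator_of_mem, Set.indicator_of_notMem, h1, h2]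
    · simp [Set.indicator_of_mem, Set.indicator_of_notMem, h1, h2]
    · simp [Set.indicator_of_mem, Set.indicator_of_notMem, h1, h2]
  have hSm : MeasurableSet S := hB1m.union hB2m
  have hD : (∫ x in Γ, u x ^ 2) = 2 * Vb := by
    have : (∫ x in Γ, u x ^ 2) = ∫ x in Γ, S.indicator (fun _ => (1 : ℝ)) x := by
      apply integral_congr_ae
      filter_upwards with x using hsq x
    rw [this, setIntegral_indicator hSm,
      Set.inter_eq_self_of_subset_right hSΓ, setIntegral_const]
    rw [hS_def, measureReal_def, measure_union hdis hB2m, ← hVeq]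
    simp only [smul_eq_mul, mul_one]
    rw [ENNReal.toReal_add hVfin.ne hVfin.ne, hVb_def]
    ring
  have hDpos : 0 < ∫ x in Γ, u x ^ 2 := by rw [hD]; linarith
  refine ⟨u, hmem, hmean, hDpos, ?_⟩
  -- now the energy estimate
  set H : Set (EuclideanSpace ℝ (Fin n) × EuclideanSpace ℝ (Fin n)) := ((Ω ∪ Γ) ×ˢ (Ω ∪ Γ)) \ (Γ ×ˢ Γ) with hH_def
  have hHm : MeasurableSet H :=
    (((hΩm.union hΓm).prod (hΩm.union hΓm)).diff (hΓm.prod hΓm))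
  set T : Set (EuclideanSpace ℝ (Fin n) × EuclideanSpace ℝ (Fin n)) := (S ×ˢ Ωhat) ∪ (Ωhat ×ˢ S) with hT_def
  have hTm : MeasurableSet T :=
    (hSm.prod hΩopen.measurableSet).union (hΩopen.measurableSet.prod hSm)
  set g : EuclideanSpace ℝ (Fin n) × EuclideanSpace ℝ (Fin n) → ℝ := fun z => J (z.1 - z.2) * (u z.2 - u z.1) ^ 2 with hg_def
  set G : EuclideanSpace ℝ (Fin n) × EuclideanSpace ℝ (Fin n) → ℝ := fun z => T.indicator (fun _ => 4 * κ) z with hG_def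
  -- key facts:
  have hSΩ : ∀ x, x ∈ S → x ∉ Ω := by
    intro x hx hxΩ
    rw [hΩ] at hxΩ
    exact hxΩ.2 (hSΓ hx)
  have hu_zero : ∀ x, x ∉ S → u x = 0 := by
    intro x hx
    rw [hS_def, Set.mem_union, not_or] at hx
    rw [hu_def]
    simp [Set.indicator_of_notMem, hx.1, hx.2]
  -- if one point is in Ω and the other in S, then J is small
  have hJsmall : ∀ x y : EuclideanSpace ℝ (Fin n), x ∈ Ω → y ∈ S → J (x - y) ≤ κ := by
    intro x y hxΩ hyS
    have hx : R < Metric.infDist x F := by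
      rw [hΩ] at hxΩ
      obtain ⟨hx1, hx2⟩ := hxΩ
      rw [hΓ] at hx2
      simp only [Set.mem_setOf_eq, not_and] at hx2
      have := hx2 hx1
      rw [hrR] at this
      push_neg at this
      exact this
    have hy : Metric.infDist y F < η := (hSU hyS).2
    have hdist : R - η < dist x y := by
      have h1 : Metric.infDist x F ≤ Metric.infDist y F + dist x y :=
        Metric.infDist_le_infDist_add_dist
      linarith
    have hnorm : ‖(R - η) • e‖ ≤ ‖x - y‖ := by
      rw [norm_smul, he, Real.norm_eq_abs, abs_of_pos (by linarith), mul_one]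
      rw [← dist_eq_norm]
      linarith
    exact hJdecr _ _ hnorm
  have hdiffsq : ∀ x y : EuclideanSpace ℝ (Fin n), (u y - u x) ^ 2 ≤ 4 := by
    intro x y
    have h1 := hu_abs x
    have h2 := hu_abs y
    have h3 := abs_le.mp h1
    have h4 := abs_le.mp h2
    nlinarith
  -- pointwise bound on H
  have hkey : ∀ z ∈ H, g z ≤ G z := by
    intro z hz
    rw [hH_def] at hz
    obtain ⟨⟨hz1, hz2⟩, hzΓΓ⟩ := hz
    rw [Set.mem_prod] at hzΓΓ
    push_neg at hzΓΓ
    by_cases h1 : z.1 ∈ S <;> by_cases h2 : z.2 ∈ S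
    · -- both in S ⊆ Γ: contradiction with z ∉ Γ ×ˢ Γ
      exact absurd (hSΓ h2) (hzΓΓ (hSΓ h1))
    · -- z.1 ∈ S, z.2 ∉ S; then z.2 ∈ Ω (else both in Γ)
      have hz2Ω : z.2 ∈ Ω := by
        rcases hz2 with h | h
        · exact h
        · rcases hz1 with h' | h'
          · exact absurd h' (hSΩ _ h1)
          · exact absurd h (hzΓΓ h')
      have hJle : J (z.1 - z.2) ≤ κ := by
        have : J (z.2 - z.1) ≤ κ := hJsmall _ _ hz2Ω h1
        rwa [hJradial (z.1 - z.2) (z.2 - z.1) (by rw [← neg_sub, norm_neg])]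
      have hGz : G z = 4 * κ := by
        rw [hG_def]
        apply Set.indicator_of_mem
        rw [hT_def]
        exact Or.inl ⟨h1, hΩsub hz2Ω⟩
      rw [hGz, hg_def]
      calc J (z.1 - z.2) * (u z.2 - u z.1) ^ 2 ≤ κ * 4 :=
            mul_le_mul hJle (hdiffsq _ _) (sq_nonneg _) hκ0
        _ = 4 * κ := by ring
    · -- z.2 ∈ S, z.1 ∉ S; then z.1 ∈ Ω
      have hz1Ω : z.1 ∈ Ω := by
        rcases hz1 with h | h
        · exact h
        · rcases hz2 with h' | h'
          · exact absurd h' (hSΩ _ h2)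
          · exact absurd h' (hzΓΓ h)
      have hJle : J (z.1 - z.2) ≤ κ := hJsmall _ _ hz1Ω h2
      have hGz : G z = 4 * κ := by
        rw [hG_def]
        apply Set.indicator_of_mem
        rw [hT_def]
        exact Or.inr ⟨hΩsub hz1Ω, h2⟩
      rw [hGz, hg_def]
      calc J (z.1 - z.2) * (u z.2 - u z.1) ^ 2 ≤ κ * 4 :=
            mul_le_mul hJle (hdiffsq _ _) (sq_nonneg _) hκ0
        _ = 4 * κ := by ring
    · -- neither in S: u values are 0
      have e1 : u z.1 = 0 := hu_zero _ h1
      have e2 : u z.2 = 0 := hu_zero _ h2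
      rw [hg_def]
      simp only [e1, e2, sub_zero, zero_pow, mul_zero]
      have : (0 : ℝ) ≤ G z := by
        rw [hG_def]
        apply Set.indicator_nonneg
        intro _ _
        linarith
      simpa using this
  -- measure of H is finite
  have hHfin : volume H < ∞ := by
    have hsub : H ⊆ Ωhat ×ˢ Ωhat := by
      rw [hH_def]
      exact diff_subset.trans (Set.prod_mono hΩΓsub hΩΓsub)
    calc volume H ≤ volume (Ωhat ×ˢ Ωhat) := measure_mono hsub
      _ = volume Ωhat * volume Ωhat := by
          rw [Measure.volume_eq_prod, Measure.prod_prod]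
      _ < ∞ := ENNReal.mul_lt_top hΩhatfin hΩhatfin
  -- integrability of g on H
  have hgmeas : Measurable g := by
    rw [hg_def]
    apply Measurable.mul
    · exact hJcont.measurable.comp (measurable_fst.sub measurable_snd)
    · exact ((hum.comp measurable_snd).sub (hum.comp measurable_fst)).pow_const 2
  have hIg : IntegrableOn g H volume := by
    apply Measure.integrableOn_of_bounded hHfin.ne hgmeas.aestronglyMeasurable
      (M := J 0 * 4)
    filter_upwards with z
    rw [hg_def]
    have h1 : 0 ≤ J (z.1 - z.2) * (u z.2 - u z.1) ^ 2 :=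
      mul_nonneg (hJnonneg _) (sq_nonneg _)
    rw [Real.norm_eq_abs, abs_of_nonneg h1]
    have h2 : J (z.1 - z.2) ≤ J 0 := hJdecr 0 _ (by simp)
    exact mul_le_mul h2 (hdiffsq _ _) (sq_nonneg _) (hJnonneg _)
  have hIG : IntegrableOn G H volume := by
    rw [hG_def]
    exact (integrableOn_const hHfin.ne).indicator hTm
  -- the comparison
  have hcomp : (∫ z in H, g z) ≤ ∫ z in H, G z := setIntegral_mono_on hIg hIG hHm hkey
  -- compute the bound
  have hTbound : volume (H ∩ T) ≤ 4 * volume B1 * volume Ωhat := by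
    calc volume (H ∩ T) ≤ volume T := measure_mono inter_subset_right
      _ ≤ volume (S ×ˢ Ωhat) + volume (Ωhat ×ˢ S) := measure_union_le _ _
      _ = volume S * volume Ωhat + volume Ωhat * volume S := by
          rw [Measure.volume_eq_prod, Measure.prod_prod, Measure.prod_prod]
      _ ≤ (volume B1 + volume B2) * volume Ωhat
            + volume Ωhat * (volume B1 + volume B2) := by
          gcongr <;> exact measure_union_le _ _
      _ = 4 * volume B1 * volume Ωhat := by rw [← hVeq]; ring
  have hGval : (∫ z in H, G z) ≤ 4 * κ * (4 * Vb * W) := by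
    rw [hG_def]
    rw [setIntegral_indicator hTm, setIntegral_const, smul_eq_mul, measureReal_def]
    have hfin : (4 : ℝ≥0∞) * volume B1 * volume Ωhat ≠ ∞ :=
      (ENNReal.mul_lt_top (ENNReal.mul_lt_top (by norm_num) hVfin) hΩhatfin).ne
    have h1 : (volume (H ∩ T)).toReal ≤ 4 * Vb * W := by
      have := ENNReal.toReal_mono hfin hTbound
      rw [ENNReal.toReal_mul, ENNReal.toReal_mul] at this
      simpa [hVb_def, hW_def] using this
    calc (volume (H ∩ T)).toReal * (4 * κ) ≤ (4 * Vb * W) * (4 * κ) := by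
          apply mul_le_mul_of_nonneg_right h1; linarith
      _ = 4 * κ * (4 * Vb * W) := by ring
  -- conclude
  rw [hD]
  calc (∫ z in H, g z) ≤ ∫ z in H, G z := hcomp
    _ ≤ 4 * κ * (4 * Vb * W) := hGval
    _ < ε * (2 * Vb) := by
        have hκW : κ * (8 * W + 1) < ε := by
          rw [hε₀_def] at hκε
          have h8W : 0 < 8 * W + 1 := by linarith
          calc κ * (8 * W + 1) < ε / (8 * W + 1) * (8 * W + 1) := by
                apply mul_lt_mul_of_pos_right hκε h8W
            _ = ε := by field_simp
        nlinarith [hVb0, hκ0, hW0]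

end
end

section
/- For every 1 ≤ p < ∞ and every 0 < r ≤ R (no restriction on the width of Γ_r relative to the support of J), the constant β := inf { (1/2) ∫_{Ω_r ∪ Γ_r} ∫_{Ω_r ∪ Γ_r} J(x − y)|u(y) − u(x)|^p dy dx / ∫_{Γ_r} |u(x)|^p dx : u ∈ L^p(Ω_r ∪ Γ_r), ∫_{Γ_r} u = 0, ∫_{Γ_r} |u|^p > 0 } is strictly positive. -/
open MeasureTheory Set Metric
open scoped ENNReal NNReal Classical

noncomputable section
namespace PoincareAux

variable {α : Type*} [MeasurableSpace α]

/-- pointwise p-th power difference, in `ℝ≥0∞`. -/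
def G (v : α → ℝ) (p : ℝ) (x y : α) : ℝ≥0∞ := (ENNReal.ofReal |v x - v y|) ^ p

/-- the double "variation" integral. -/
def T (μ : Measure α) (v : α → ℝ) (p : ℝ) (s t : Set α) : ℝ≥0∞ :=
  ∫⁻ x in s, ∫⁻ y in t, G v p x y ∂μ ∂μ

lemma G_symm (v : α → ℝ) (p : ℝ) (x y : α) : G v p x y = G v p y x := by
  simp [G, abs_sub_comm]

lemma G_meas {v : α → ℝ} (hv : Measurable v) (p : ℝ) :
    Measurable (fun z : α × α => G v p z.1 z.2) := by
  exact (ENNReal.measurable_ofReal.comp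
    ((hv.comp measurable_fst).sub (hv.comp measurable_snd)).abs).pow_const p

lemma G_triangle {p : ℝ} (hp : 1 ≤ p) (v : α → ℝ) (x y z : α) :
    G v p x y ≤ (2 : ℝ≥0∞) ^ (p - 1) * (G v p x z + G v p z y) := by
  have h1 : ENNReal.ofReal |v x - v y| ≤
      ENNReal.ofReal |v x - v z| + ENNReal.ofReal |v z - v y| := by
    refine le_trans (ENNReal.ofReal_le_ofReal (abs_sub_le (v x) (v z) (v y))) ?_
    exact ENNReal.ofReal_add_le
  calc G v p x y ≤ (ENNReal.ofReal |v x - v z| + ENNReal.ofReal |v z - v y|) ^ p :=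
        ENNReal.rpow_le_rpow h1 (by linarith)
    _ ≤ _ := ENNReal.rpow_add_le_mul_rpow_add_rpow _ _ hp

lemma T_mono (μ : Measure α) (v : α → ℝ) (p : ℝ) {s s' t t' : Set α}
    (hs : s ⊆ s') (ht : t ⊆ t') : T μ v p s t ≤ T μ v p s' t' := by
  refine le_trans (lintegral_mono fun x => lintegral_mono_set ht) ?_
  exact lintegral_mono_set hs

lemma G_meas_left {v : α → ℝ} (hv : Measurable v) (p : ℝ) (x : α) :
    Measurable (fun z => G v p x z) :=
  (ENNReal.measurable_ofReal.comp ((measurable_const.sub hv).abs)).pow_const p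

lemma A_meas {μ : Measure α} [SFinite μ] {v : α → ℝ} (hv : Measurable v) (p : ℝ) (Z : Set α) :
    Measurable (fun x => ∫⁻ z in Z, G v p x z ∂μ) :=
  (G_meas hv p).lintegral_prod_right'

lemma B_meas {μ : Measure α} [SFinite μ] {v : α → ℝ} (hv : Measurable v) (p : ℝ) (Z : Set α) :
    Measurable (fun y => ∫⁻ z in Z, G v p z y ∂μ) :=
  Measurable.lintegral_prod_right' ((G_meas hv p).comp measurable_swap)

lemma two_rpow_ne_top {p : ℝ} (hp : 1 ≤ p) : ((2 : ℝ≥0∞) ^ (p - 1)) ≠ ∞ :=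
  ENNReal.rpow_ne_top_of_nonneg (by linarith) (by simp)

lemma T_triangle (μ : Measure α) [SFinite μ] {v : α → ℝ} (hv : Measurable v) {p : ℝ}
    (hp : 1 ≤ p) (s : Set α) {t : Set α} (ht : μ t ≠ ∞) {Z : Set α} (hZ0 : μ Z ≠ 0)
    (hZt : μ Z ≠ ∞) :
    T μ v p s t ≤ (2 : ℝ≥0∞) ^ (p - 1) * (μ Z)⁻¹ *
      (μ t * T μ v p s Z + μ s * T μ v p Z t) := by
  set C : ℝ≥0∞ := (2 : ℝ≥0∞) ^ (p - 1) with hC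
  have hCtop : C ≠ ∞ := two_rpow_ne_top hp
  set A : α → ℝ≥0∞ := fun x => ∫⁻ z in Z, G v p x z ∂μ with hA
  set B : α → ℝ≥0∞ := fun y => ∫⁻ z in Z, G v p z y ∂μ with hB
  have key : ∀ x y, G v p x y ≤ (μ Z)⁻¹ * (C * (A x + B y)) := by
    intro x y
    have h1 : μ Z * G v p x y ≤ C * (A x + B y) := by
      have h0 : μ Z * G v p x y = ∫⁻ _ in Z, G v p x y ∂μ := by
        rw [setLIntegral_const, mul_comm]
      rw [h0]
      calc ∫⁻ z in Z, G v p x y ∂μ ≤ ∫⁻ z in Z, C * (G v p x z + G v p z y) ∂μ :=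
            lintegral_mono fun z => G_triangle hp v x y z
        _ = C * (A x + B y) := by
            rw [lintegral_const_mul' _ _ hCtop,
              lintegral_add_left (G_meas_left hv p x)]
    calc G v p x y = (μ Z)⁻¹ * (μ Z * G v p x y) := by
          rw [← mul_assoc, ENNReal.inv_mul_cancel hZ0 hZt, one_mul]
      _ ≤ (μ Z)⁻¹ * (C * (A x + B y)) := mul_le_mul_right h1 _
  have hinv : (μ Z)⁻¹ ≠ ∞ := ENNReal.inv_ne_top.2 hZ0
  have hAm : Measurable A := A_meas hv p Z
  have hBm : Measurable B := B_meas hv p Z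
  have hswap : ∫⁻ y in t, B y ∂μ = T μ v p Z t := by
    exact lintegral_lintegral_swap (((G_meas hv p).comp measurable_swap).aemeasurable)
  calc T μ v p s t ≤ ∫⁻ x in s, ∫⁻ y in t, (μ Z)⁻¹ * (C * (A x + B y)) ∂μ ∂μ :=
        lintegral_mono fun x => lintegral_mono fun y => key x y
    _ = (μ Z)⁻¹ * (C * (μ t * T μ v p s Z + μ s * T μ v p Z t)) := by
        have inner : ∀ x, ∫⁻ y in t, (μ Z)⁻¹ * (C * (A x + B y)) ∂μ
            = (μ Z)⁻¹ * (C * (A x * μ t + T μ v p Z t)) := by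
          intro x
          rw [lintegral_const_mul' _ _ hinv, lintegral_const_mul' _ _ hCtop,
            lintegral_add_left (by exact measurable_const), setLIntegral_const, hswap]
        simp_rw [inner]
        rw [lintegral_const_mul' _ _ hinv, lintegral_const_mul' _ _ hCtop,
          lintegral_add_right _ (by exact measurable_const),
          lintegral_mul_const' _ _ ht, setLIntegral_const]
        have : ∫⁻ x in s, A x ∂μ = T μ v p s Z := rfl
        rw [this, mul_comm (T μ v p s Z) (μ t), mul_comm (T μ v p Z t) (μ s)]
    _ = _ := by ring

/-- The nonlocal energy over `D × D` with kernel `K`. -/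
def En (μ : Measure α) (v : α → ℝ) (p : ℝ) (K : α → α → ℝ) (D : Set α) : ℝ≥0∞ :=
  ∫⁻ x in D, ∫⁻ y in D, ENNReal.ofReal (K x y) * G v p x y ∂μ ∂μ

lemma T_le_energy (μ : Measure α) (v : α → ℝ) (p : ℝ)
    (K : α → α → ℝ) {D s t : Set α} (hs : s ⊆ D) (ht : t ⊆ D)
    (hsm : MeasurableSet s) (htm : MeasurableSet t)
    {c : ℝ} (hst : ∀ x ∈ s, ∀ y ∈ t, c ≤ K x y) :
    ENNReal.ofReal c * T μ v p s t ≤ En μ v p K D := by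
  have step1 : ENNReal.ofReal c * T μ v p s t
      ≤ ∫⁻ x in s, ∫⁻ y in t, ENNReal.ofReal (K x y) * G v p x y ∂μ ∂μ := by
    rw [T, ← lintegral_const_mul' _ _ ENNReal.ofReal_ne_top]
    refine setLIntegral_mono' hsm fun x hx => ?_
    rw [← lintegral_const_mul' _ _ ENNReal.ofReal_ne_top]
    refine setLIntegral_mono' htm fun y hy => ?_
    exact mul_le_mul_left (ENNReal.ofReal_le_ofReal (hst x hx y hy)) _
  refine step1.trans ?_
  refine le_trans (lintegral_mono fun x => lintegral_mono_set ht) ?_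
  exact lintegral_mono_set hs

lemma lintegral_finset_biUnion_le {ι : Type*} (μ : Measure α) (F : Finset ι)
    (A : ι → Set α) (f : α → ℝ≥0∞) :
    ∫⁻ x in ⋃ q ∈ F, A q, f x ∂μ ≤ ∑ q ∈ F, ∫⁻ x in A q, f x ∂μ := by
  classical
  induction F using Finset.induction_on with
  | empty => simp
  | insert q F' hq ih =>
      rw [Finset.set_biUnion_insert, Finset.sum_insert hq]
      exact le_trans (lintegral_union_le _ _ _) (add_le_add_right ih _)

lemma T_biUnion_le {ι : Type*} (μ : Measure α) [SFinite μ] {v : α → ℝ} (hv : Measurable v)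
    (p : ℝ) (F : Finset ι) (A : ι → Set α) {s t : Set α}
    (hs : s ⊆ ⋃ q ∈ F, A q) (ht : t ⊆ ⋃ q ∈ F, A q) :
    T μ v p s t ≤ ∑ q ∈ F, ∑ q' ∈ F, T μ v p (A q) (A q') := by
  calc T μ v p s t ≤ ∫⁻ x in s, ∑ q' ∈ F, ∫⁻ y in A q', G v p x y ∂μ ∂μ :=
        lintegral_mono fun x =>
          le_trans (lintegral_mono_set ht) (lintegral_finset_biUnion_le μ F A _)
    _ ≤ ∑ q ∈ F, ∫⁻ x in A q, ∑ q' ∈ F, ∫⁻ y in A q', G v p x y ∂μ ∂μ :=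
        le_trans (lintegral_mono_set hs) (lintegral_finset_biUnion_le μ F A _)
    _ = ∑ q ∈ F, ∑ q' ∈ F, T μ v p (A q) (A q') := by
        refine Finset.sum_congr rfl fun q _ => ?_
        exact lintegral_finset_sum _ fun q' _ => A_meas hv p (A q')

lemma jensen_pointwise {μ : Measure α} {v : α → ℝ} (hv : Measurable v) {p : ℝ}
    (hp : 1 ≤ p) {Γ : Set α} (hΓ0 : μ Γ ≠ 0) (hΓt : μ Γ ≠ ∞)
    (hvint : Integrable v (μ.restrict Γ)) (hvlp : MemLp v (ENNReal.ofReal p) (μ.restrict Γ))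
    (hmean : ∫ y in Γ, v y ∂μ = 0) (x : α) :
    (ENNReal.ofReal |v x|) ^ p ≤ (μ Γ)⁻¹ * ∫⁻ y in Γ, G v p x y ∂μ := by
  set κ : Measure α := (μ Γ)⁻¹ • μ.restrict Γ with hκ
  have hinv_ne_top : (μ Γ)⁻¹ ≠ ∞ := ENNReal.inv_ne_top.2 hΓ0
  haveI : IsProbabilityMeasure κ := by
    constructor
    rw [hκ, Measure.smul_apply, smul_eq_mul, Measure.restrict_apply_univ,
      ENNReal.inv_mul_cancel hΓ0 hΓt]
  haveI : IsFiniteMeasure (μ.restrict Γ) :=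
    ⟨by rw [Measure.restrict_apply_univ]; exact lt_top_iff_ne_top.2 hΓt⟩
  have hne : (μ Γ).toReal ≠ 0 := by
    simp only [ne_eq, ENNReal.toReal_eq_zero_iff]
    push_neg
    exact ⟨hΓ0, hΓt⟩
  set f : α → ℝ := fun y => v x - v y with hf
  have hfint : Integrable f κ := by
    refine Integrable.smul_measure ?_ hinv_ne_top
    exact (integrable_const (v x)).sub hvint
  have hmean' : ∫ y, f y ∂κ = v x := by
    rw [hκ, integral_smul_measure, integral_sub (integrable_const (v x)) hvint, hmean,
      integral_const, measureReal_restrict_apply_univ, measureReal_def, sub_zero, ENNReal.toReal_inv,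
      smul_eq_mul, smul_eq_mul]
    field_simp
  have hp0 : (0 : ℝ) < p := lt_of_lt_of_le one_pos hp
  have hq0 : (ENNReal.ofReal p) ≠ 0 := by
    simp [ENNReal.ofReal_eq_zero, not_le, hp0]
  have hqt : (ENNReal.ofReal p) ≠ ∞ := ENNReal.ofReal_ne_top
  have step1 : ENNReal.ofReal |v x| ≤ eLpNorm f 1 κ := by
    rw [eLpNorm_one_eq_lintegral_enorm,
      ← ofReal_integral_norm_eq_lintegral_enorm hfint]
    refine ENNReal.ofReal_le_ofReal ?_
    rw [← hmean']
    simpa using norm_integral_le_integral_norm f (μ := κ)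
  have step2 : eLpNorm f 1 κ ≤ eLpNorm f (ENNReal.ofReal p) κ :=
    eLpNorm_le_eLpNorm_of_exponent_le (by
      rw [← ENNReal.ofReal_one]
      exact ENNReal.ofReal_le_ofReal hp) hfint.aestronglyMeasurable
  have step3 : (eLpNorm f (ENNReal.ofReal p) κ) ^ p = ∫⁻ y, ‖f y‖ₑ ^ p ∂κ := by
    rw [eLpNorm_eq_lintegral_rpow_enorm_toReal hq0 hqt, ENNReal.toReal_ofReal hp0.le,
      ← ENNReal.rpow_mul, one_div, inv_mul_cancel₀ (ne_of_gt hp0), ENNReal.rpow_one]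
  calc (ENNReal.ofReal |v x|) ^ p ≤ (eLpNorm f (ENNReal.ofReal p) κ) ^ p :=
        ENNReal.rpow_le_rpow (step1.trans step2) hp0.le
    _ = ∫⁻ y, ‖f y‖ₑ ^ p ∂κ := step3
    _ = (μ Γ)⁻¹ * ∫⁻ y in Γ, G v p x y ∂μ := by
        rw [hκ, lintegral_smul_measure]
        congr 1
        refine lintegral_congr fun y => ?_
        rw [G, Real.enorm_eq_ofReal_abs]

section Chain
variable {α : Type*} [MetricSpace α] [MeasurableSpace α] [OpensMeasurableSpace α]

lemma chain_bound (μ : Measure α) [SFinite μ] [μ.IsOpenPosMeasure] (p : ℝ) (hp : 1 ≤ p)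
    (K : α → α → ℝ) {D : Set α} (hDo : IsOpen D) (hDt : μ D ≠ ∞) {δ c : ℝ} (hδ : 0 < δ)
    (hc0 : 0 < c) (hK : ∀ x y : α, dist x y < 2 * δ → c ≤ K x y)
    {a b : α} (ha : a ∈ D)
    (hab : Relation.ReflTransGen (fun q q' => (ball q δ ∩ ball q' δ ∩ D).Nonempty) a b) :
    ∃ C : ℝ≥0∞, C ≠ ∞ ∧ ∀ w : α → ℝ, Measurable w →
      T μ w p (ball a δ ∩ D) (ball b δ ∩ D) ≤ C * En μ w p K D := by
  have hBm : ∀ q : α, MeasurableSet (ball q δ ∩ D) :=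
    fun q => (isOpen_ball.inter hDo).measurableSet
  have hBsub : ∀ q : α, ball q δ ∩ D ⊆ D := fun q => inter_subset_right
  have hBt : ∀ q : α, μ (ball q δ ∩ D) ≠ ∞ :=
    fun q => ne_top_of_le_ne_top hDt (measure_mono (hBsub q))
  have hcinv : (ENNReal.ofReal c)⁻¹ ≠ ∞ := by
    rw [ENNReal.inv_ne_top]
    simp [ENNReal.ofReal_eq_zero, not_le, hc0]
  -- base-type estimate : both sets inside a common δ-ball
  have base : ∀ (q : α) (s t : Set α), s ⊆ ball q δ ∩ D → t ⊆ ball q δ ∩ D →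
      MeasurableSet s → MeasurableSet t → ∀ w : α → ℝ,
      T μ w p s t ≤ (ENNReal.ofReal c)⁻¹ * En μ w p K D := by
    intro q s t hs ht hsm htm w
    have hle : ENNReal.ofReal c * T μ w p s t ≤ En μ w p K D := by
      refine T_le_energy μ w p K (hs.trans (hBsub q)) (ht.trans (hBsub q)) hsm htm ?_
      intro x hx y hy
      refine hK x y ?_
      have h1 : dist x q < δ := (hs hx).1
      have h2 : dist y q < δ := (ht hy).1
      calc dist x y ≤ dist x q + dist q y := dist_triangle _ _ _
        _ < δ + δ := by rw [dist_comm q y]; exact add_lt_add h1 h2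
        _ = 2 * δ := by ring
    calc T μ w p s t = (ENNReal.ofReal c)⁻¹ * (ENNReal.ofReal c * T μ w p s t) := by
          rw [← mul_assoc, ENNReal.inv_mul_cancel (by
            simp [ENNReal.ofReal_eq_zero, not_le, hc0]) ENNReal.ofReal_ne_top, one_mul]
      _ ≤ (ENNReal.ofReal c)⁻¹ * En μ w p K D := mul_le_mul_right hle _
  induction hab with
  | refl =>
      exact ⟨(ENNReal.ofReal c)⁻¹, hcinv, fun w hw =>
        base a _ _ (fun x hx => hx) (fun x hx => hx) (hBm a) (hBm a) w⟩
  | tail hab' hadj ih =>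
      rename_i b' b
      obtain ⟨C', hC't, hC'⟩ := ih
      set W : Set α := ball b' δ ∩ ball b δ ∩ D with hWdef
      have hWo : IsOpen W := (isOpen_ball.inter isOpen_ball).inter hDo
      have hW0 : μ W ≠ 0 := (hWo.measure_pos μ hadj).ne'
      have hWD : W ⊆ D := inter_subset_right
      have hWt : μ W ≠ ∞ := ne_top_of_le_ne_top hDt (measure_mono hWD)
      refine ⟨(2 : ℝ≥0∞) ^ (p - 1) * (μ W)⁻¹ *
        (μ (ball b δ ∩ D) * C' + μ (ball a δ ∩ D) * (ENNReal.ofReal c)⁻¹), ?_, ?_⟩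
      · refine ENNReal.mul_ne_top (ENNReal.mul_ne_top (two_rpow_ne_top hp)
          (ENNReal.inv_ne_top.2 hW0)) ?_
        exact ENNReal.add_ne_top.2 ⟨ENNReal.mul_ne_top (hBt b) hC't,
          ENNReal.mul_ne_top (hBt a) hcinv⟩
      · intro w hw
        have t1 : T μ w p (ball a δ ∩ D) W ≤ C' * En μ w p K D := by
          refine le_trans (T_mono μ w p (le_refl _) ?_) (hC' w hw)
          intro x hx
          exact ⟨hx.1.1, hx.2⟩
        have t2 : T μ w p W (ball b δ ∩ D) ≤ (ENNReal.ofReal c)⁻¹ * En μ w p K D := by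
          refine base b W _ ?_ (fun x hx => hx) hWo.measurableSet (hBm b) w
          intro x hx
          exact ⟨hx.1.2, hx.2⟩
        calc T μ w p (ball a δ ∩ D) (ball b δ ∩ D)
            ≤ (2 : ℝ≥0∞) ^ (p - 1) * (μ W)⁻¹ *
              (μ (ball b δ ∩ D) * T μ w p (ball a δ ∩ D) W +
               μ (ball a δ ∩ D) * T μ w p W (ball b δ ∩ D)) :=
              T_triangle μ hw hp _ (hBt b) hW0 hWt
          _ ≤ (2 : ℝ≥0∞) ^ (p - 1) * (μ W)⁻¹ *
              (μ (ball b δ ∩ D) * (C' * En μ w p K D) +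
               μ (ball a δ ∩ D) * ((ENNReal.ofReal c)⁻¹ * En μ w p K D)) := by
              refine mul_le_mul_right (add_le_add ?_ ?_) _
              · exact mul_le_mul_right t1 _
              · exact mul_le_mul_right t2 _
          _ = _ := by ring

lemma cover_connect [ProperSpace α] {D : Set α} (hDo : IsOpen D) (hDc : IsConnected D)
    (hDb : Bornology.IsBounded D) {δ : ℝ} (hδ : 0 < δ) :
    ∃ F : Finset α, (∀ q ∈ F, q ∈ D) ∧ (D ⊆ ⋃ q ∈ F, ball q δ) ∧
      ∀ a ∈ F, ∀ b ∈ F, Relation.ReflTransGen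
        (fun q q' => (ball q δ ∩ ball q' δ ∩ D).Nonempty) a b := by
  classical
  -- finite cover of the compact closure by δ-balls centered in D
  have hcomp : IsCompact (closure D) := hDb.isCompact_closure
  have hcov : closure D ⊆ ⋃ x ∈ D, ball x δ := by
    intro y hy
    obtain ⟨x, hxD, hxy⟩ := Metric.mem_closure_iff.1 hy δ hδ
    exact mem_biUnion hxD (by rwa [mem_ball])
  obtain ⟨F₀, hF₀D, hF₀fin, hF₀cov⟩ :=
    hcomp.elim_finite_subcover_image (fun x _ => isOpen_ball) hcov
  refine ⟨hF₀fin.toFinset, ?_, ?_, ?_⟩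
  · intro q hq
    exact hF₀D (hF₀fin.mem_toFinset.1 hq)
  · refine subset_closure.trans (hF₀cov.trans ?_)
    refine iUnion₂_subset fun q hq => ?_
    exact subset_biUnion_of_mem (u := fun q => ball q δ) (hF₀fin.mem_toFinset.2 hq)
  · intro a ha b hb
    set Adj : α → α → Prop := fun q q' => (ball q δ ∩ ball q' δ ∩ D).Nonempty with hAdj
    by_contra hnot
    set U : Set α := ⋃ q ∈ hF₀fin.toFinset.filter
      (fun q => Relation.ReflTransGen Adj a q), ball q δ with hU
    set V : Set α := ⋃ q ∈ hF₀fin.toFinset.filter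
      (fun q => ¬ Relation.ReflTransGen Adj a q), ball q δ with hV
    have hUo : IsOpen U := isOpen_biUnion fun _ _ => isOpen_ball
    have hVo : IsOpen V := isOpen_biUnion fun _ _ => isOpen_ball
    have hcover : D ⊆ U ∪ V := by
      intro x hx
      have hx' : x ∈ closure D := subset_closure hx
      obtain ⟨q, hq, hxq⟩ := mem_iUnion₂.1 (hF₀cov hx')
      have hqF : q ∈ hF₀fin.toFinset := hF₀fin.mem_toFinset.2 hq
      by_cases hreach : Relation.ReflTransGen Adj a q
      · exact Or.inl (mem_biUnion (Finset.mem_filter.2 ⟨hqF, hreach⟩) hxq)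
      · exact Or.inr (mem_biUnion (Finset.mem_filter.2 ⟨hqF, hreach⟩) hxq)
    have hUne : (D ∩ U).Nonempty := by
      refine ⟨a, hF₀D (hF₀fin.mem_toFinset.1 ha), ?_⟩
      exact mem_biUnion (Finset.mem_filter.2 ⟨ha, Relation.ReflTransGen.refl⟩)
        (mem_ball_self hδ)
    have hVne : (D ∩ V).Nonempty := by
      refine ⟨b, hF₀D (hF₀fin.mem_toFinset.1 hb), ?_⟩
      exact mem_biUnion (Finset.mem_filter.2 ⟨hb, hnot⟩) (mem_ball_self hδ)
    obtain ⟨x, hxD, hxU, hxV⟩ := hDc.isPreconnected U V hUo hVo hcover hUne hVne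
    obtain ⟨q, hq, hxq⟩ := mem_iUnion₂.1 hxU
    obtain ⟨q', hq', hxq'⟩ := mem_iUnion₂.1 hxV
    have hreach : Relation.ReflTransGen Adj a q := (Finset.mem_filter.1 hq).2
    have hnreach : ¬ Relation.ReflTransGen Adj a q' := (Finset.mem_filter.1 hq').2
    exact hnreach (hreach.tail ⟨x, ⟨hxq, hxq'⟩, hxD⟩)

end Chain

end PoincareAux

open PoincareAux in
/-- the Poincaré-type constant with the full double integral over
`(Ω_r ∪ Γ_r) × (Ω_r ∪ Γ_r)` is strictly positive for every `0 < r ≤ R`. -/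
theorem poincare_constant_positive_full
    (n : ℕ) (hn : 1 ≤ n)
    (Ωhat : Set (EuclideanSpace ℝ (Fin n)))
    (hΩopen : IsOpen Ωhat) (hΩconn : IsConnected Ωhat)
    (hΩbdd : Bornology.IsBounded Ωhat)
    (R : ℝ) (hR : 0 < R)
    (J : EuclideanSpace ℝ (Fin n) → ℝ)
    (hJcont : Continuous J) (hJnonneg : ∀ x, 0 ≤ J x)
    (hJradial : ∀ x y, ‖x‖ = ‖y‖ → J x = J y)
    (hJdecr : ∀ x y, ‖x‖ ≤ ‖y‖ → J y ≤ J x)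
    (hJpos : ∀ x, ‖x‖ < R → 0 < J x)
    (hJzero : ∀ x, R ≤ ‖x‖ → J x = 0)
    (hJint : ∫ w, J w = 1)
    (r : ℝ) (hr0 : 0 < r) (hrR : r ≤ R)
    (Γ Ω : Set (EuclideanSpace ℝ (Fin n)))
    (hΓ : Γ = {x ∈ Ωhat | Metric.infDist x (frontier Ωhat) ≤ r})
    (hΩ : Ω = Ωhat \ Γ)
    (hΩint : (interior Ω).Nonempty)
    (p : ℝ) (hp1 : 1 ≤ p) :
    ∃ β : ℝ, 0 < β ∧
      ∀ u : EuclideanSpace ℝ (Fin n) → ℝ,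
        MemLp u (ENNReal.ofReal p) (volume.restrict (Ω ∪ Γ)) →
        (∫ x in Γ, u x) = 0 →
        β * ∫ x in Γ, |u x| ^ p ≤
          (1 / 2) * ∫ z in (Ω ∪ Γ) ×ˢ (Ω ∪ Γ),
            J (z.1 - z.2) * |u z.2 - u z.1| ^ p := by
  classical
  set D := Ωhat with hD
  have hp0 : (0 : ℝ) < p := lt_of_lt_of_le one_pos hp1
  -- basic set facts
  have hΓsub : Γ ⊆ D := by rw [hΓ]; exact fun x hx => hx.1
  have hunion : Ω ∪ Γ = D := by rw [hΩ]; exact diff_union_of_subset hΓsub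
  have hDo : IsOpen D := hΩopen
  have hDm : MeasurableSet D := hDo.measurableSet
  have hDne : D.Nonempty := hΩconn.nonempty
  have hDt : volume D ≠ ∞ := (hΩbdd.measure_lt_top).ne
  have hΓm : MeasurableSet Γ := by
    rw [hΓ]
    exact hDm.inter ((isClosed_le (continuous_infDist_pt _) continuous_const).measurableSet)
  have hΓt : volume Γ ≠ ∞ := ne_top_of_le_ne_top hDt (measure_mono hΓsub)
  -- Γ has positive volume
  have i0 : Fin n := ⟨0, hn⟩
  have hfront : (frontier D).Nonempty := by
    by_contra hemp
    rw [not_nonempty_iff_eq_empty] at hemp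
    have hclopen : IsClopen D := isClopen_iff_frontier_eq_empty.2 hemp
    rcases isClopen_iff.1 hclopen with h | h
    · exact absurd h (Nonempty.ne_empty hDne)
    · obtain ⟨C, hC⟩ := isBounded_iff_forall_norm_le.1 hΩbdd
      have hx : EuclideanSpace.single i0 (|C| + 1) ∈ D := h ▸ mem_univ _
      have := hC _ hx
      rw [EuclideanSpace.norm_single, Real.norm_eq_abs] at this
      have h1 : |C| + 1 ≤ C := le_trans (le_abs_self _) this
      have h2 : C ≤ |C| := le_abs_self C
      linarith
  have hΓ0 : volume Γ ≠ 0 := by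
    obtain ⟨y, hy⟩ := hfront
    have hyc : y ∈ closure D := frontier_subset_closure hy
    obtain ⟨x₀, hx₀D, hx₀y⟩ := Metric.mem_closure_iff.1 hyc r hr0
    set V : Set (EuclideanSpace ℝ (Fin n)) := D ∩ {x | Metric.infDist x (frontier D) < r} with hV
    have hVo : IsOpen V := hDo.inter (isOpen_lt (continuous_infDist_pt _) continuous_const)
    have hx₀V : x₀ ∈ V := by
      refine ⟨hx₀D, ?_⟩
      have : Metric.infDist x₀ (frontier D) ≤ dist x₀ y := Metric.infDist_le_dist_of_mem hy
      simp only [mem_setOf_eq]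
      rw [dist_comm] at hx₀y
      linarith
    have hVΓ : V ⊆ Γ := by
      rw [hΓ]
      exact fun x hx => ⟨hx.1, le_of_lt hx.2⟩
    exact fun h => (hVo.measure_pos volume ⟨x₀, hx₀V⟩).ne' (measure_mono_null hVΓ h)
  -- constants
  set δ : ℝ := R / 4 with hδdef
  have hδ : 0 < δ := by positivity
  set vhalf : EuclideanSpace ℝ (Fin n) := EuclideanSpace.single i0 (R / 2) with hvhalf
  have hvnorm : ‖vhalf‖ = R / 2 := by
    rw [hvhalf, EuclideanSpace.norm_single, Real.norm_eq_abs, abs_of_pos (by positivity)]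
  set c : ℝ := J vhalf with hc
  have hc0 : 0 < c := hJpos _ (by rw [hvnorm]; linarith)
  set K : EuclideanSpace ℝ (Fin n) → EuclideanSpace ℝ (Fin n) → ℝ := fun x y => J (x - y) with hK
  have hKc : ∀ x y : EuclideanSpace ℝ (Fin n), dist x y < 2 * δ → c ≤ K x y := by
    intro x y hxy
    refine hJdecr (x - y) vhalf ?_
    rw [hvnorm, ← dist_eq_norm]
    have : 2 * δ = R / 2 := by rw [hδdef]; ring
    linarith [hxy.le, this ▸ hxy.le]
  have hKnn : ∀ x y : EuclideanSpace ℝ (Fin n), 0 ≤ K x y := fun x y => hJnonneg _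
  -- covering and chain constants
  obtain ⟨F, hFD, hFcov, hFconn⟩ := cover_connect hDo hΩconn hΩbdd hδ
  have hpair : ∀ qq : EuclideanSpace ℝ (Fin n) × EuclideanSpace ℝ (Fin n), ∃ C : ℝ≥0∞, C ≠ ∞ ∧ (qq.1 ∈ F → qq.2 ∈ F →
      ∀ w : EuclideanSpace ℝ (Fin n) → ℝ, Measurable w →
        T volume w p (ball qq.1 δ ∩ D) (ball qq.2 δ ∩ D) ≤ C * En volume w p K D) := by
    rintro ⟨q, q'⟩
    by_cases h : q ∈ F ∧ q' ∈ F
    · obtain ⟨C, hCt, hC⟩ := chain_bound volume p hp1 K hDo hDt hδ hc0 hKc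
        (hFD q h.1) (hFconn q h.1 q' h.2)
      exact ⟨C, hCt, fun _ _ => hC⟩
    · exact ⟨0, by simp, fun h1 h2 => absurd ⟨h1, h2⟩ h⟩
  choose Cf hCft hCf using hpair
  set Ctot : ℝ≥0∞ := ∑ q ∈ F, ∑ q' ∈ F, Cf (q, q') with hCtot
  have hCtott : Ctot ≠ ∞ := by
    rw [hCtot]
    refine (ENNReal.sum_lt_top.2 fun q _ => ?_).ne
    exact ENNReal.sum_lt_top.2 fun q' _ => lt_top_iff_ne_top.2 (hCft _)
  set Ktot : ℝ≥0∞ := (volume Γ)⁻¹ * Ctot + 1 with hKtot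
  have hKtott : Ktot ≠ ∞ := by
    rw [hKtot]
    exact ENNReal.add_ne_top.2 ⟨ENNReal.mul_ne_top (ENNReal.inv_ne_top.2 hΓ0) hCtott, ENNReal.one_ne_top⟩
  have hKtot0 : Ktot ≠ 0 := by
    rw [hKtot]
    simp
  have hKtoReal : 0 < Ktot.toReal := ENNReal.toReal_pos hKtot0 hKtott
  have hq0 : (ENNReal.ofReal p) ≠ 0 := by simp [ENNReal.ofReal_eq_zero, not_le, hp0]
  have hqt : (ENNReal.ofReal p) ≠ ∞ := ENNReal.ofReal_ne_top
  refine ⟨(2 * Ktot.toReal)⁻¹, by positivity, ?_⟩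
  intro u hu hmean
  rw [hunion] at hu
  -- measurable representative
  have husm := hu.aestronglyMeasurable
  set v : EuclideanSpace ℝ (Fin n) → ℝ := husm.mk u with hvdef
  have hvm : Measurable v := husm.stronglyMeasurable_mk.measurable
  have huv : u =ᵐ[volume.restrict D] v := husm.ae_eq_mk
  have hvlp : MemLp v (ENNReal.ofReal p) (volume.restrict D) := hu.ae_eq huv
  have huvΓ : u =ᵐ[volume.restrict Γ] v := ae_restrict_of_ae_restrict_of_subset hΓsub huv
  have hvmean : ∫ y in Γ, v y = 0 := by rw [← integral_congr_ae huvΓ]; exact hmean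
  haveI : IsFiniteMeasure (volume.restrict Γ) :=
    ⟨by rw [Measure.restrict_apply_univ]; exact lt_top_iff_ne_top.2 hΓt⟩
  have hvintΓ : Integrable v (volume.restrict Γ) := by
    refine (hvlp.mono_measure (Measure.restrict_mono hΓsub le_rfl)).integrable ?_
    rw [← ENNReal.ofReal_one]
    exact ENNReal.ofReal_le_ofReal hp1
  -- left side as a lower Lebesgue integral
  set L : ℝ≥0∞ := ∫⁻ x in Γ, (ENNReal.ofReal |v x|) ^ p with hLdef
  have hLHS : ∫ x in Γ, |u x| ^ p = L.toReal := by
    have h1 : ∫ x in Γ, |u x| ^ p = ∫ x in Γ, |v x| ^ p :=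
      integral_congr_ae (huvΓ.fun_comp fun t => |t| ^ p)
    rw [h1, integral_eq_lintegral_of_nonneg_ae
      (Filter.Eventually.of_forall fun x => by positivity)
      (hvm.abs.pow_const p).aestronglyMeasurable]
    congr 1
    refine lintegral_congr fun x => ?_
    rw [ENNReal.ofReal_rpow_of_nonneg (abs_nonneg _) hp0.le]
  -- Jensen step
  have hjensen : L ≤ (volume Γ)⁻¹ * T volume v p Γ Γ := by
    calc L ≤ ∫⁻ x in Γ, (volume Γ)⁻¹ * ∫⁻ y in Γ, G v p x y := by
          refine lintegral_mono fun x => ?_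
          exact jensen_pointwise hvm hp1 hΓ0 hΓt hvintΓ
            (hvlp.mono_measure (Measure.restrict_mono hΓsub le_rfl)) hvmean x
      _ = (volume Γ)⁻¹ * T volume v p Γ Γ :=
          lintegral_const_mul' _ _ (ENNReal.inv_ne_top.2 hΓ0)
  -- chain step
  have hchain : T volume v p Γ Γ ≤ Ctot * En volume v p K D := by
    have hsub : Γ ⊆ ⋃ q ∈ F, (ball q δ ∩ D) := by
      intro x hx
      obtain ⟨q, hq, hxq⟩ := mem_iUnion₂.1 (hFcov (hΓsub hx))
      exact mem_biUnion hq ⟨hxq, hΓsub hx⟩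
    have h1 : T volume v p Γ Γ ≤
        ∑ q ∈ F, ∑ q' ∈ F, T volume v p (ball q δ ∩ D) (ball q' δ ∩ D) :=
      T_biUnion_le volume hvm p F _ hsub hsub
    have h2 : ∑ q ∈ F, ∑ q' ∈ F, T volume v p (ball q δ ∩ D) (ball q' δ ∩ D) ≤
        ∑ q ∈ F, ∑ q' ∈ F, Cf (q, q') * En volume v p K D := by
      refine Finset.sum_le_sum fun q hq => Finset.sum_le_sum fun q' hq' => ?_
      exact hCf (q, q') hq hq' v hvm
    refine le_trans h1 (le_trans h2 ?_)
    rw [hCtot, Finset.sum_mul]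
    refine le_of_eq (Finset.sum_congr rfl fun q _ => ?_)
    rw [Finset.sum_mul]
  -- finiteness of the energy
  set a : EuclideanSpace ℝ (Fin n) → ℝ≥0∞ := fun x => (ENNReal.ofReal |v x|) ^ p with hadef
  have ham : Measurable a := (ENNReal.measurable_ofReal.comp hvm.abs).pow_const p
  set I : ℝ≥0∞ := ∫⁻ x in D, a x with hIdef
  have hIt : I ≠ ∞ := by
    have h1 : I = (eLpNorm v (ENNReal.ofReal p) (volume.restrict D)) ^ p := by
      rw [eLpNorm_eq_lintegral_rpow_enorm_toReal hq0 hqt, ENNReal.toReal_ofReal hp0.le,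
        ← ENNReal.rpow_mul, one_div, inv_mul_cancel₀ hp0.ne', ENNReal.rpow_one, hIdef]
      refine lintegral_congr fun x => ?_
      rw [hadef, Real.enorm_eq_ofReal_abs]
    rw [h1]
    exact ENNReal.rpow_ne_top_of_nonneg hp0.le hvlp.2.ne
  have hGb : ∀ x y, G v p x y ≤ (2 : ℝ≥0∞) ^ (p - 1) * (a x + a y) := by
    intro x y
    have h1 : ENNReal.ofReal |v x - v y| ≤ ENNReal.ofReal |v x| + ENNReal.ofReal |v y| :=
      le_trans (ENNReal.ofReal_le_ofReal (abs_sub _ _)) ENNReal.ofReal_add_le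
    calc G v p x y ≤ (ENNReal.ofReal |v x| + ENNReal.ofReal |v y|) ^ p :=
          ENNReal.rpow_le_rpow h1 hp0.le
      _ ≤ _ := ENNReal.rpow_add_le_mul_rpow_add_rpow _ _ hp1
  have hEnt : En volume v p K D ≠ ∞ := by
    have hbound : En volume v p K D ≤ ENNReal.ofReal (J 0) *
        ((2 : ℝ≥0∞) ^ (p - 1) * (I * volume D + I * volume D)) := by
      rw [En]
      have inner : ∀ x, ∫⁻ y in D, ENNReal.ofReal (J 0) *
          ((2 : ℝ≥0∞) ^ (p - 1) * (a x + a y)) ∂volume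
          = ENNReal.ofReal (J 0) * ((2 : ℝ≥0∞) ^ (p - 1) * (a x * volume D + I)) := by
        intro x
        rw [lintegral_const_mul' _ _ ENNReal.ofReal_ne_top,
          lintegral_const_mul' _ _ (two_rpow_ne_top hp1),
          lintegral_add_left (by exact measurable_const), setLIntegral_const, hIdef]
      calc ∫⁻ x in D, ∫⁻ y in D, ENNReal.ofReal (K x y) * G v p x y ∂volume ∂volume
          ≤ ∫⁻ x in D, ∫⁻ y in D, ENNReal.ofReal (J 0) *
              ((2 : ℝ≥0∞) ^ (p - 1) * (a x + a y)) ∂volume ∂volume := by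
            refine lintegral_mono fun x => lintegral_mono fun y => ?_
            refine mul_le_mul' (ENNReal.ofReal_le_ofReal ?_) (hGb x y)
            exact hJdecr 0 (x - y) (by simp)
        _ = ENNReal.ofReal (J 0) *
              ((2 : ℝ≥0∞) ^ (p - 1) * (I * volume D + I * volume D)) := by
            simp_rw [inner]
            rw [lintegral_const_mul' _ _ ENNReal.ofReal_ne_top,
              lintegral_const_mul' _ _ (two_rpow_ne_top hp1),
              lintegral_add_right _ (by exact measurable_const),
              lintegral_mul_const' _ _ hDt, setLIntegral_const, hIdef,
              mul_comm I (volume D)]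
    refine ne_top_of_le_ne_top ?_ hbound
    refine ENNReal.mul_ne_top ENNReal.ofReal_ne_top ?_
    refine ENNReal.mul_ne_top (two_rpow_ne_top hp1) ?_
    exact ENNReal.add_ne_top.2 ⟨ENNReal.mul_ne_top hIt hDt, ENNReal.mul_ne_top hIt hDt⟩
  -- right-hand side as the energy
  have hmeasInt : Measurable (fun z : EuclideanSpace ℝ (Fin n) × EuclideanSpace ℝ (Fin n) =>
      J (z.1 - z.2) * |v z.2 - v z.1| ^ p) :=
    (hJcont.measurable.comp (measurable_fst.sub measurable_snd)).mul
      (((hvm.comp measurable_snd).sub (hvm.comp measurable_fst)).abs.pow_const p)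
  set N : Set (EuclideanSpace ℝ (Fin n)) :=
    toMeasurable volume ({x | ¬ u x = v x} ∩ D) with hNdef
  have hN0 : volume N = 0 := by
    rw [hNdef, measure_toMeasurable]
    have h := huv
    rw [Filter.EventuallyEq, ae_iff, Measure.restrict_apply' hDm] at h
    exact h
  set Bad : Set (EuclideanSpace ℝ (Fin n) × EuclideanSpace ℝ (Fin n)) :=
    (N ×ˢ univ) ∪ (univ ×ˢ N) with hBaddef
  have hBad0 : volume Bad = 0 := by
    refine le_antisymm (le_trans (measure_union_le _ _) ?_) zero_le
    rw [Measure.volume_eq_prod, Measure.prod_prod, Measure.prod_prod, hN0, zero_mul,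
      mul_zero, add_zero]
  have haeq : (fun z : EuclideanSpace ℝ (Fin n) × EuclideanSpace ℝ (Fin n) =>
        J (z.1 - z.2) * |u z.2 - u z.1| ^ p)
      =ᵐ[volume.restrict (D ×ˢ D)]
      (fun z => J (z.1 - z.2) * |v z.2 - v z.1| ^ p) := by
    have h1 : ∀ᵐ z ∂(volume.restrict (D ×ˢ D)), z ∉ Bad :=
      Filter.Eventually.filter_mono (ae_mono Measure.restrict_le_self)
        (measure_eq_zero_iff_ae_notMem.1 hBad0)
    have h2 : ∀ᵐ z ∂(volume.restrict (D ×ˢ D)), z ∈ D ×ˢ D := ae_restrict_mem (hDm.prod hDm)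
    filter_upwards [h1, h2] with z hz1 hz2
    have e1 : u z.1 = v z.1 := by
      by_contra hne
      exact hz1 (Or.inl ⟨subset_toMeasurable _ _ ⟨hne, hz2.1⟩, mem_univ _⟩)
    have e2 : u z.2 = v z.2 := by
      by_contra hne
      exact hz1 (Or.inr ⟨mem_univ _, subset_toMeasurable _ _ ⟨hne, hz2.2⟩⟩)
    rw [e1, e2]
  have hRHSeq : ∫ z in (Ω ∪ Γ) ×ˢ (Ω ∪ Γ), J (z.1 - z.2) * |u z.2 - u z.1| ^ p
      = (En volume v p K D).toReal := by
    rw [hunion, integral_congr_ae haeq, integral_eq_lintegral_of_nonneg_ae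
      (Filter.Eventually.of_forall fun z => mul_nonneg (hJnonneg _) (by positivity))
      hmeasInt.aestronglyMeasurable]
    congr 1
    have hpt : ∀ z : EuclideanSpace ℝ (Fin n) × EuclideanSpace ℝ (Fin n),
        ENNReal.ofReal (J (z.1 - z.2) * |v z.2 - v z.1| ^ p)
        = ENNReal.ofReal (K z.1 z.2) * G v p z.1 z.2 := by
      intro z
      rw [ENNReal.ofReal_mul (hJnonneg _),
        ← ENNReal.ofReal_rpow_of_nonneg (abs_nonneg _) hp0.le, G, abs_sub_comm (v z.2)]
    simp_rw [hpt]
    rw [Measure.volume_eq_prod, ← Measure.prod_restrict]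
    exact lintegral_prod _ (((ENNReal.measurable_ofReal.comp
        (hJcont.measurable.comp (measurable_fst.sub measurable_snd))).mul
        (G_meas hvm p)).aemeasurable)
  -- final arithmetic
  rw [hLHS, hRHSeq]
  have hle : L ≤ Ktot * En volume v p K D := by
    calc L ≤ (volume Γ)⁻¹ * T volume v p Γ Γ := hjensen
      _ ≤ (volume Γ)⁻¹ * (Ctot * En volume v p K D) := mul_le_mul_right hchain _
      _ = ((volume Γ)⁻¹ * Ctot) * En volume v p K D := by rw [mul_assoc]
      _ ≤ Ktot * En volume v p K D := by
          refine mul_le_mul_left ?_ _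
          rw [hKtot]
          exact le_add_of_nonneg_right zero_le
  have h2 : L.toReal ≤ Ktot.toReal * (En volume v p K D).toReal := by
    rw [← ENNReal.toReal_mul]
    exact ENNReal.toReal_mono (ENNReal.mul_ne_top hKtott hEnt) hle
  have hEnnn : 0 ≤ (En volume v p K D).toReal := ENNReal.toReal_nonneg
  calc (2 * Ktot.toReal)⁻¹ * L.toReal
      ≤ (2 * Ktot.toReal)⁻¹ * (Ktot.toReal * (En volume v p K D).toReal) :=
        mul_le_mul_of_nonneg_left h2 (by positivity)
    _ = (1 / 2) * (En volume v p K D).toReal := by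
        field_simp

end
end
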